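/- A closed subset M of X^# is a minimal nonempty closed invariant subset if and only if M ≠ ∅ and M equals the closure of p̆ = {q ∈ X^# : q ∥ p} for every p ∈ M. -/
import Mathlib


open Metric Bornology Set

variable {X : Type*} [MetricSpace X]

/-- `B(A,r) = ⋃_{a∈A} B(a,r)` where `B(a,r)` is the closed ball of radius `r`. -/
def ballU (A : Set X) (r : ℝ) : Set X := ⋃ a ∈ A, Metric.closedBall a r

/-- `X^#`: the set of ultrafilters on `X` all of whose members are unbounded. -/
def sharp (X : Type*) [MetricSpace X] : Set (Ultrafilter X) :=
  {p | ∀ P ∈ p, ¬ Bornology.IsBounded P}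

/-- Parallelity: `p ∥ q` iff there is `r ≥ 0` with `B(Q,r) ∈ p` for every `Q ∈ q`. -/
def Par (p q : Ultrafilter X) : Prop :=
  ∃ r : ℝ, 0 ≤ r ∧ ∀ Q ∈ q, ballU Q r ∈ p

/-- `p̆ = {q ∈ X^# : q ∥ p}`. -/
def pbreve (p : Ultrafilter X) : Set (Ultrafilter X) :=
  {q | q ∈ sharp X ∧ Par q p}

/-- The `p`-companion `Δ_p(Y) = {q ∈ X^# : Y ∈ q, q ∥ p}`. -/
def Delta (p : Ultrafilter X) (Y : Set X) : Set (Ultrafilter X) :=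
  {q | q ∈ sharp X ∧ Y ∈ q ∧ Par q p}

/-- A set `S ⊆ X^#` is invariant if `p ∈ S`, `q ∈ X^#`, `q ∥ p` imply `q ∈ S`. -/
def Invt (S : Set (Ultrafilter X)) : Prop :=
  ∀ p ∈ S, ∀ q, q ∈ sharp X → Par q p → q ∈ S

/-- `Y` is large if `X = B(Y,r)` for some `r ≥ 0`. -/
def Large (Y : Set X) : Prop := ∃ r : ℝ, 0 ≤ r ∧ ballU Y r = Set.univ

/-- `Y` is thick if for every `r ≥ 0` there is `y ∈ Y` with `B(y,r) ⊆ Y`. -/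
def Thick (Y : Set X) : Prop := ∀ r : ℝ, 0 ≤ r → ∃ y ∈ Y, Metric.closedBall y r ⊆ Y

/-- `Y` is prethick if `B(Y,r)` is thick for some `r ≥ 0`. -/
def Prethick (Y : Set X) : Prop := ∃ r : ℝ, 0 ≤ r ∧ Thick (ballU Y r)

/-- `Y` is small if `(X∖Y) ∩ L` is large for every large `L`. -/
def SmallSet (Y : Set X) : Prop := ∀ L : Set X, Large L → Large (Yᶜ ∩ L)

/-- `Y` is thin if for each `r ≥ 0` there is a bounded `V` with
`B(y,r) ∩ Y = {y}` for all `y ∈ Y∖V`. -/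
def Thin (Y : Set X) : Prop :=
  ∀ r : ℝ, 0 ≤ r → ∃ V : Set X, Bornology.IsBounded V ∧
    ∀ y ∈ Y \ V, Metric.closedBall y r ∩ Y = {y}

/-- `Y` is `n`-thin if for each `r ≥ 0` there is a bounded `V` with
`|B(y,r) ∩ Y| ≤ n` for all `y ∈ Y∖V`. -/
def NThin (n : ℕ) (Y : Set X) : Prop :=
  ∀ r : ℝ, 0 ≤ r → ∃ V : Set X, Bornology.IsBounded V ∧
    ∀ y ∈ Y \ V, (Metric.closedBall y r ∩ Y).encard ≤ n

/-- `M` is a minimal nonempty closed invariant subset of `X^#`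
(closures/closedness taken in the Stone topology on ultrafilters). -/
def MinCI (M : Set (Ultrafilter X)) : Prop :=
  M ⊆ sharp X ∧ M.Nonempty ∧ IsClosed M ∧ Invt M ∧
    ∀ S ⊆ M, S.Nonempty → IsClosed S → Invt S → S = M


section Aux

lemma mem_ballU' {A : Set X} {r : ℝ} {x : X} :
    x ∈ ballU A r ↔ ∃ a ∈ A, x ∈ Metric.closedBall a r := by
  simp [ballU]

lemma subset_ballU' {A : Set X} {r : ℝ} (hr : 0 ≤ r) : A ⊆ ballU A r := fun x hx =>
  mem_ballU'.2 ⟨x, hx, by simp [hr]⟩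

lemma ballU_ballU' {A : Set X} {r s : ℝ} : ballU (ballU A s) r ⊆ ballU A (r + s) := by
  intro x hx
  obtain ⟨a, ha, hxa⟩ := mem_ballU'.1 hx
  obtain ⟨b, hb, hab⟩ := mem_ballU'.1 ha
  refine mem_ballU'.2 ⟨b, hb, ?_⟩
  simp only [Metric.mem_closedBall] at *
  calc dist x b ≤ dist x a + dist a b := dist_triangle _ _ _
    _ ≤ r + s := add_le_add hxa hab

lemma ballU_bounded' {A : Set X} {r : ℝ} (h : IsBounded A) : IsBounded (ballU A r) := by
  rcases A.eq_empty_or_nonempty with rfl | ⟨a0, ha0⟩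
  · simp [ballU]
  · obtain ⟨R, hR⟩ := h.subset_closedBall a0
    apply (isBounded_closedBall (x := a0) (r := R + max r 0)).subset
    intro x hx
    obtain ⟨a, ha, hxa⟩ := mem_ballU'.1 hx
    have h1 : dist a a0 ≤ R := hR ha
    have h2 : dist x a ≤ r := hxa
    have : dist x a0 ≤ dist x a + dist a a0 := dist_triangle _ _ _
    simp only [Metric.mem_closedBall]
    calc dist x a0 ≤ dist x a + dist a a0 := dist_triangle _ _ _
      _ ≤ max r 0 + R := add_le_add (h2.trans (le_max_left _ _)) h1
      _ = R + max r 0 := add_comm _ _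

lemma par_symm' {p q : Ultrafilter X} {r : ℝ} (hr : 0 ≤ r)
    (h : ∀ Q ∈ q, ballU Q r ∈ p) : ∀ P ∈ p, ballU P r ∈ q := by
  intro P hP
  by_contra hc
  have hcomp : (ballU P r)ᶜ ∈ q := Ultrafilter.compl_mem_iff_notMem.2 hc
  have h1 : ballU ((ballU P r)ᶜ) r ∈ p := h _ hcomp
  have h2 : ballU ((ballU P r)ᶜ) r ∩ P = ∅ := by
    ext x
    simp only [Set.mem_inter_iff, Set.mem_empty_iff_false, iff_false, not_and]
    intro hx1 hx2
    obtain ⟨c, hc', hxc⟩ := mem_ballU'.1 hx1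
    exact hc' (mem_ballU'.2 ⟨x, hx2, by rwa [Metric.mem_closedBall, dist_comm]⟩)
  have h3 : (∅ : Set X) ∈ (p : Filter X) := h2 ▸ Filter.inter_mem h1 hP
  exact Filter.empty_notMem (p : Filter X) h3

lemma par_symm {p q : Ultrafilter X} (h : Par p q) : Par q p := by
  obtain ⟨r, hr, hh⟩ := h
  exact ⟨r, hr, par_symm' hr hh⟩

lemma par_refl (p : Ultrafilter X) : Par p p :=
  ⟨0, le_refl 0, fun Q hQ => Filter.mem_of_superset hQ (subset_ballU' le_rfl)⟩

lemma par_trans {p q s : Ultrafilter X} (h1 : Par p q) (h2 : Par q s) : Par p s := by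
  obtain ⟨r1, hr1, hp1⟩ := h1
  obtain ⟨r2, hr2, hp2⟩ := h2
  exact ⟨r1 + r2, add_nonneg hr1 hr2, fun Q hQ =>
    Filter.mem_of_superset (hp1 _ (hp2 _ hQ)) ballU_ballU'⟩

lemma sharp_closed : IsClosed (sharp X) := by
  have h : sharp X = ⋂ P ∈ {P : Set X | IsBounded P}, {p : Ultrafilter X | P ∈ p}ᶜ := by
    ext p
    simp only [sharp, Set.mem_setOf_eq, Set.mem_iInter, Set.mem_compl_iff]
    constructor
    · intro hp P hP hPp; exact hp P hPp hP
    · intro hp P hPp hP; exact hp P hP hPp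
  rw [h]
  exact isClosed_biInter fun P _ => (ultrafilter_isOpen_basic P).isClosed_compl

lemma mem_closure_ultra {S : Set (Ultrafilter X)} {q : Ultrafilter X} :
    q ∈ closure S ↔ ∀ A ∈ q, ∃ s ∈ S, A ∈ s := by
  rw [ultrafilterBasis_is_basis.mem_closure_iff]
  constructor
  · intro h A hA
    obtain ⟨s, hso, hsS⟩ := h {u | A ∈ u} ⟨A, rfl⟩ hA
    exact ⟨s, hsS, hso⟩
  · rintro h o ⟨A, rfl⟩ hq
    obtain ⟨s, hsS, hAs⟩ := h A hq
    exact ⟨s, hAs, hsS⟩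

lemma invt_closure {S : Set (Ultrafilter X)} (hS : S ⊆ sharp X) (hI : Invt S) :
    Invt (closure S ∩ sharp X) := by
  rintro q ⟨hqcl, hqsh⟩ q' hq'sh hpar
  refine ⟨?_, hq'sh⟩
  obtain ⟨r, hr, hparr⟩ := hpar
  rw [mem_closure_ultra] at hqcl ⊢
  intro A hA
  have hAq : ballU A r ∈ q := par_symm' hr hparr A hA
  obtain ⟨s, hsS, hAs⟩ := hqcl _ hAq
  have hAne : A.Nonempty := Ultrafilter.nonempty_of_mem hA
  classical
  set f : X → X := fun x => if h : ∃ a ∈ A, x ∈ Metric.closedBall a r then h.choose else x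
    with hf
  have hdist : ∀ x, dist x (f x) ≤ r := by
    intro x
    by_cases h : ∃ a ∈ A, x ∈ Metric.closedBall a r
    · simp only [hf, dif_pos h]
      exact h.choose_spec.2
    · simp only [hf]; rw [dif_neg h]; simpa using hr
  have hfA : ∀ x ∈ ballU A r, f x ∈ A := by
    intro x hx
    have h : ∃ a ∈ A, x ∈ Metric.closedBall a r := mem_ballU'.1 hx
    simp only [hf, dif_pos h]
    exact h.choose_spec.1
  have hfid : ∀ x, f x ∈ A ∨ f x = x := by
    intro x
    by_cases h : ∃ a ∈ A, x ∈ Metric.closedBall a r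
    · left; simp only [hf, dif_pos h]; exact h.choose_spec.1
    · right; simp only [hf]; rw [dif_neg h]
  set s' : Ultrafilter X := s.map f with hs'
  have hAs' : A ∈ s' := by
    rw [hs', Ultrafilter.mem_map]
    exact Filter.mem_of_superset hAs (fun x hx => hfA x hx)
  have hpre : ∀ P : Set X, f ⁻¹' P ⊆ ballU P r := by
    intro P x hx
    rcases hfid x with h | h
    · exact mem_ballU'.2 ⟨f x, hx, by rw [Metric.mem_closedBall]; exact hdist x⟩
    · exact mem_ballU'.2 ⟨f x, hx, by rw [Metric.mem_closedBall, h]; simpa using hr⟩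
  have hs'sh : s' ∈ sharp X := by
    intro P hP hPb
    rw [hs', Ultrafilter.mem_map] at hP
    exact hS hsS _ hP ((ballU_bounded' hPb).subset (hpre P))
  have hpar' : Par s' s := by
    refine ⟨r, hr, fun Q hQ => ?_⟩
    rw [hs', Ultrafilter.mem_map]
    refine Filter.mem_of_superset hQ (fun x hx => ?_)
    exact mem_ballU'.2 ⟨x, hx, by rw [Metric.mem_closedBall, dist_comm]; exact hdist x⟩
  exact ⟨s', hI s hsS s' hs'sh hpar', hAs'⟩

lemma pbreve_invt (p : Ultrafilter X) : Invt (pbreve p) := by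
  rintro q ⟨hqsh, hqpar⟩ q' hq'sh hpar'
  exact ⟨hq'sh, par_trans hpar' hqpar⟩

end Aux

theorem stmt4 (hX : ¬ Bornology.IsBounded (Set.univ : Set X))
    (M : Set (Ultrafilter X)) (hM : M ⊆ sharp X) (hcl : IsClosed M) :
    MinCI M ↔ M.Nonempty ∧ ∀ p ∈ M, M = closure (pbreve p) ∩ sharp X := by
  constructor
  · rintro ⟨hsub, hne, hclosed, hinvt, hmin⟩
    refine ⟨hne, fun p hp => ?_⟩
    set S := closure (pbreve p) ∩ sharp X with hS
    have hpbM : pbreve p ⊆ M := fun q hq => hinvt p hp q hq.1 hq.2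
    have hSM : S ⊆ M := fun q hq =>
      (closure_minimal hpbM hclosed) hq.1
    have hSne : S.Nonempty :=
      ⟨p, subset_closure ⟨hM hp, par_refl p⟩, hM hp⟩
    have hScl : IsClosed S := isClosed_closure.inter sharp_closed
    have hSI : Invt S := invt_closure (fun q hq => hq.1) (pbreve_invt p)
    exact (hmin S hSM hSne hScl hSI).symm
  · rintro ⟨hne, hrep⟩
    refine ⟨hM, hne, hcl, ?_, ?_⟩
    · intro p hp q hqsh hpar
      rw [hrep p hp]
      exact ⟨subset_closure ⟨hqsh, hpar⟩, hqsh⟩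
    · intro S hSM hSne hScl hSI
      obtain ⟨s, hs⟩ := hSne
      refine Set.Subset.antisymm hSM ?_
      rw [hrep s (hSM hs)]
      have hpbS : pbreve s ⊆ S := fun q hq => hSI s hs q hq.1 hq.2
      intro q hq
      exact (closure_minimal hpbS hScl) hq.1
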